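/- For every n ∈ ℕ, the derivative ε_n' of the residual ε_n(x) = erf(x) − f_n(x) vanishes to order 2n+2 at the origin: the j-th derivative of ε_n' at 0 equals 0 for every 0 ≤ j ≤ 2n+1, and its (2n+2)-th derivative at 0 equals (2n+2)! / (√π · 2^n · ∏_{i=0}^n (2i+1)). -/

import Mathlib

open Real intervalIntegral

/-- The error function. -/
noncomputable def erf (x : ℝ) : ℝ :=
  (2 / Real.sqrt π) * ∫ t in (0:ℝ)..x, Real.exp (-t ^ 2)

/-- The Hermite-type polynomials `p k x`. -/
noncomputable def p : ℕ → ℝ → ℝ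
  | 0 => fun _ => 1
  | (k + 1) => fun x => deriv (p k) x - 2 * x * p k x

/-- Spline coefficients `c_{n,k}`. -/
noncomputable def c (n k : ℕ) : ℝ :=
  ((Nat.factorial n : ℝ) / ((Nat.factorial (n - k) : ℝ) * (Nat.factorial (k + 1) : ℝ))) *
    ((Nat.factorial (2 * n + 1 - k) : ℝ) / (2 * (Nat.factorial (2 * n + 1) : ℝ)))

/-- The n-th order spline based approximation to the error function. -/
noncomputable def f (n : ℕ) (x : ℝ) : ℝ :=
  (2 / Real.sqrt π) * ∑ k ∈ Finset.range (n + 1),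
    c n k * x ^ (k + 1) * (p k 0 + (-1 : ℝ) ^ k * p k x * Real.exp (-x ^ 2))

namespace Resid
open Polynomial

noncomputable def EE (Q : ℝ[X]) : ℝ[X] := derivative Q - 2 * (X * Q)

noncomputable def PP : ℕ → ℝ[X]
  | 0 => 1
  | (k + 1) => EE (PP k)

noncomputable def phi (x : ℝ) : ℝ := Real.exp (-x ^ 2)

lemma hasDerivAt_phi (x : ℝ) : HasDerivAt phi (-2 * x * phi x) x := by
  have h : HasDerivAt (fun x : ℝ => -x ^ 2) (-(2 * x)) x := by
    simpa using (hasDerivAt_pow 2 x).fun_neg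
  unfold phi
  simpa [mul_comm, mul_assoc, mul_left_comm] using h.exp

lemma p_eq (k : ℕ) : p k = fun x => (PP k).eval x := by
  induction k with
  | zero => simp [p, PP]
  | succ k ih =>
      funext x
      show deriv (p k) x - 2 * x * p k x = eval x (PP (k + 1))
      rw [ih, Polynomial.deriv]
      show _ = eval x (EE (PP k))
      simp [EE]; ring

lemma EE_add (Q R : ℝ[X]) : EE (Q + R) = EE Q + EE R := by
  unfold EE; rw [derivative_add]; ring

lemma EE_sub (Q R : ℝ[X]) : EE (Q - R) = EE Q - EE R := by
  unfold EE; rw [derivative_sub]; ring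

lemma EE_const_mul (a : ℝ[X]) (hC : derivative a = 0) (Q : ℝ[X]) :
    EE (a * Q) = a * EE Q := by
  unfold EE; rw [derivative_mul, hC]; ring

lemma EE_iter_add (j : ℕ) (Q R : ℝ[X]) : EE^[j] (Q + R) = EE^[j] Q + EE^[j] R := by
  induction j generalizing Q R with
  | zero => rfl
  | succ j ih => simp only [Function.iterate_succ_apply, EE_add, ih]

lemma EE_iter_sub (j : ℕ) (Q R : ℝ[X]) : EE^[j] (Q - R) = EE^[j] Q - EE^[j] R := by
  induction j generalizing Q R with
  | zero => rfl
  | succ j ih => simp only [Function.iterate_succ_apply, EE_sub, ih]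

lemma EE_iter_const_mul (j : ℕ) (a : ℝ[X]) (hC : derivative a = 0) (Q : ℝ[X]) :
    EE^[j] (a * Q) = a * EE^[j] Q := by
  induction j generalizing Q with
  | zero => rfl
  | succ j ih => simp only [Function.iterate_succ_apply, EE_const_mul a hC, ih]

lemma EE_sum (s : Finset ℕ) (g : ℕ → ℝ[X]) :
    EE (∑ k ∈ s, g k) = ∑ k ∈ s, EE (g k) := by
  classical
  induction s using Finset.induction_on with
  | empty => simp [EE]
  | insert a s h ihs => rw [Finset.sum_insert h, Finset.sum_insert h, EE_add, ihs]

lemma EE_iter_sum (j : ℕ) (s : Finset ℕ) (g : ℕ → ℝ[X]) :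
    EE^[j] (∑ k ∈ s, g k) = ∑ k ∈ s, EE^[j] (g k) := by
  induction j generalizing g with
  | zero => rfl
  | succ j ih => simp only [Function.iterate_succ_apply, EE_sum, ih]

lemma deriv_pair (Q R : ℝ[X]) :
    deriv (fun x => Q.eval x + R.eval x * phi x) =
      fun x => (derivative Q).eval x + (EE R).eval x * phi x := by
  funext x
  have h : HasDerivAt (fun x => Q.eval x + R.eval x * phi x)
      ((derivative Q).eval x + ((derivative R).eval x * phi x + R.eval x * (-2 * x * phi x))) x :=
    (Q.hasDerivAt x).add ((R.hasDerivAt x).mul (hasDerivAt_phi x))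
  rw [h.deriv]
  simp [EE]; ring

lemma iteratedDeriv_pair (j : ℕ) (Q R : ℝ[X]) :
    iteratedDeriv j (fun x => Q.eval x + R.eval x * phi x) =
      fun x => (derivative^[j] Q).eval x + (EE^[j] R).eval x * phi x := by
  induction j generalizing Q R with
  | zero => simp [iteratedDeriv_zero]
  | succ j ih =>
      rw [iteratedDeriv_succ', deriv_pair, ih]
      simp [Function.iterate_succ_apply]

lemma derivative_PP (k : ℕ) :
    derivative (PP (k + 1)) = -2 * ((k : ℝ[X]) + 1) * PP k := by
  induction k with
  | zero =>
      show derivative (EE (PP 0)) = _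
      simp [EE, PP]
  | succ k ih =>
      show derivative (EE (PP (k + 1))) = _
      unfold EE
      rw [derivative_sub, derivative_mul, derivative_mul, derivative_X, ih]
      have h2 : derivative (2 : ℝ[X]) = 0 := by simp
      have h3 : derivative (-2 * ((k : ℝ[X]) + 1)) = 0 := by simp
      rw [derivative_mul, h3, h2]
      have hPP : PP (k + 1) = derivative (PP k) - 2 * (X * PP k) := rfl
      rw [hPP]
      push_cast
      ring

lemma pp0_step (k : ℕ) : (PP (k + 2)).eval 0 = -2 * ((k : ℝ) + 1) * (PP k).eval 0 := by
  show (EE (PP (k + 1))).eval 0 = _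
  simp [EE, derivative_PP k]

lemma pp0_even (n : ℕ) :
    (PP (2 * n)).eval 0 = (-2) ^ n * ∏ i ∈ Finset.range n, (2 * (i : ℝ) + 1) := by
  induction n with
  | zero => simp [PP]
  | succ n ih =>
      have h2 : 2 * (n + 1) = 2 * n + 2 := by ring
      rw [h2, pp0_step (2 * n), ih, Finset.prod_range_succ]
      push_cast; ring

lemma EE_X_pow_mul (m k : ℕ) :
    EE (X ^ m * PP k) = (m : ℝ[X]) * (X ^ (m - 1) * PP k) + X ^ m * PP (k + 1) := by
  have hPP : PP (k + 1) = derivative (PP k) - 2 * (X * PP k) := rfl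
  unfold EE
  rw [derivative_mul, derivative_X_pow, hPP]
  cases m with
  | zero => simp
  | succ m =>
      simp only [Nat.add_sub_cancel]
      push_cast
      simp only [map_add, map_natCast, map_one]
      rw [pow_succ]
      ring

lemma eval0_EE_iter (j : ℕ) : ∀ m k : ℕ,
    (EE^[j] (X ^ m * PP k)).eval 0 =
      (j.choose m : ℝ) * (Nat.factorial m : ℝ) * (PP (k + j - m)).eval 0 := by
  induction j with
  | zero =>
      intro m k
      cases m with
      | zero => simp
      | succ m => simp [Nat.choose, zero_pow]
  | succ j ih =>
      intro m k
      rw [Function.iterate_succ_apply, EE_X_pow_mul, EE_iter_add,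
        EE_iter_const_mul j _ (by simp), eval_add, eval_mul, ih, ih]
      simp only [eval_natCast]
      cases m with
      | zero => simp [show k + 1 + j = k + (j + 1) by omega]
      | succ m =>
          simp only [Nat.add_sub_cancel]
          have e1 : k + 1 + j - (m + 1) = k + (j + 1) - (m + 1) := by omega
          have e2 : k + j - m = k + (j + 1) - (m + 1) := by omega
          rw [e1, e2, Nat.choose_succ_succ, Nat.cast_add, Nat.factorial_succ]
          push_cast
          ring

lemma PP_eq_iter (j : ℕ) : EE^[j] 1 = PP j := by
  induction j with
  | zero => rfl
  | succ j ih => rw [Function.iterate_succ_apply', ih]; rfl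

lemma cast_descFactorial_prod (M t : ℕ) :
    (M.descFactorial t : ℝ) = ∏ i ∈ Finset.range t, ((M : ℝ) - i) := by
  induction t with
  | zero => simp
  | succ t ih =>
      rw [Nat.descFactorial_succ, Finset.prod_range_succ, ← ih]
      by_cases h : t ≤ M
      · push_cast [h]
        ring
      · have h1 : M.descFactorial t = 0 := Nat.descFactorial_of_lt (by omega)
        have h2 : M - t = 0 := by omega
        rw [h1, h2]
        simp

lemma Lnat (m : ℕ) : ∀ N M : ℕ, m ≤ N →
    ∑ i ∈ Finset.range (m + 1), (-1 : ℝ) ^ i * (m.choose i) * ((N - i).factorial : ℝ) *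
      (M.descFactorial i : ℝ) =
    ((N - m).factorial : ℝ) * ∏ i ∈ Finset.range m, ((N : ℝ) - i - M) := by
  induction m with
  | zero => intro N M _; simp
  | succ m ih =>
      intro N M hmN
      have pascal : ∀ i ∈ Finset.range (m + 2),
          (-1 : ℝ) ^ i * ((m+1).choose i) * ((N - i).factorial : ℝ) * (M.descFactorial i : ℝ)
          = (-1 : ℝ) ^ i * (m.choose i) * ((N - i).factorial : ℝ) * (M.descFactorial i : ℝ)
            + (if i = 0 then 0 else
              (-1 : ℝ) ^ i * (m.choose (i-1)) * ((N - i).factorial : ℝ) * (M.descFactorial i : ℝ)) := by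
        intro i _
        cases i with
        | zero => simp
        | succ i =>
            rw [Nat.choose_succ_succ, if_neg (Nat.succ_ne_zero i)]
            simp only [Nat.add_sub_cancel]
            push_cast
            ring
      rw [Finset.sum_congr rfl pascal, Finset.sum_add_distrib]
      have hfirst : ∑ i ∈ Finset.range (m + 2),
          (-1 : ℝ) ^ i * (m.choose i) * ((N - i).factorial : ℝ) * (M.descFactorial i : ℝ)
          = ∑ i ∈ Finset.range (m + 1),
          (-1 : ℝ) ^ i * (m.choose i) * ((N - i).factorial : ℝ) * (M.descFactorial i : ℝ) := by
        rw [Finset.sum_range_succ, Nat.choose_succ_self]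
        simp
      have hsecond : (∑ i ∈ Finset.range (m + 2), (if i = 0 then (0:ℝ) else
              (-1 : ℝ) ^ i * (m.choose (i-1)) * ((N - i).factorial : ℝ) * (M.descFactorial i : ℝ)))
          = ∑ i ∈ Finset.range (m + 1),
          (-1 : ℝ) ^ (i+1) * (m.choose i) * ((N - (i+1)).factorial : ℝ) * (M.descFactorial (i+1) : ℝ) := by
        rw [Finset.sum_range_succ']
        simp
      rw [hfirst, hsecond]
      have hcomb : ∀ i ∈ Finset.range (m + 1),
          (-1 : ℝ) ^ i * (m.choose i) * ((N - i).factorial : ℝ) * (M.descFactorial i : ℝ)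
          + (-1 : ℝ) ^ (i+1) * (m.choose i) * ((N - (i+1)).factorial : ℝ) * (M.descFactorial (i+1) : ℝ)
          = ((N : ℝ) - M) *
            ((-1 : ℝ) ^ i * (m.choose i) * (((N-1) - i).factorial : ℝ) * (M.descFactorial i : ℝ)) := by
        intro i hi
        have hiM : i ≤ m := Finset.mem_range_succ_iff.mp hi
        have hfac : ((N - i).factorial : ℝ) = ((N : ℝ) - i) * (((N - 1) - i).factorial : ℝ) := by
          have h1 : N - i = (N - 1 - i) + 1 := by omega
          rw [h1, Nat.factorial_succ]
          have h2 : ((N - 1 - i : ℕ) : ℝ) = (N : ℝ) - 1 - i := by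
            rw [Nat.cast_sub (show i ≤ N - 1 by omega), Nat.cast_sub (show 1 ≤ N by omega)]
            push_cast; ring
          push_cast [h2]
          ring
        have hdf : (M.descFactorial (i+1) : ℝ) = ((M : ℝ) - i) * (M.descFactorial i : ℝ) := by
          rw [cast_descFactorial_prod, cast_descFactorial_prod, Finset.prod_range_succ]
          ring
        have hN1 : N - (i+1) = (N - 1) - i := by omega
        rw [hfac, hdf, hN1]
        ring
      rw [← Finset.sum_add_distrib, Finset.sum_congr rfl hcomb, ← Finset.mul_sum,
        ih (N-1) M (by omega)]
      have hNm : N - 1 - m = N - (m + 1) := by omega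
      rw [hNm, Finset.prod_range_succ']
      have hprod : ∀ i ∈ Finset.range m, (((N - 1 : ℕ):ℝ) - i - M) = ((N:ℝ) - (↑i+1) - M) := by
        intro i _
        rw [Nat.cast_sub (show 1 ≤ N by omega)]
        push_cast; ring
      rw [Finset.prod_congr rfl hprod]
      push_cast
      ring

noncomputable def S (n j : ℕ) : ℝ :=
  ∑ k ∈ Finset.range (n + 1),
    (-1 : ℝ) ^ k * c n k * ((j + 1).choose (k + 1) : ℝ) * ((k + 1).factorial : ℝ)

lemma S_formula (n j : ℕ) :
    S n j = 1 - ((n + 1).factorial : ℝ) *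
      (∏ i ∈ Finset.range (n + 1), ((2 * n + 1 : ℝ) - i - j)) / ((2 * n + 2).factorial : ℝ) := by
  have hL := Lnat (n + 1) (2 * n + 2) (j + 1) (by omega)
  rw [Finset.sum_range_succ'] at hL
  have hzero : (-1 : ℝ) ^ 0 * ((n+1).choose 0 : ℝ) * ((2 * n + 2 - 0).factorial : ℝ) *
      ((j+1).descFactorial 0 : ℝ) = ((2 * n + 2).factorial : ℝ) := by simp
  rw [hzero] at hL
  have hterm : ∀ k ∈ Finset.range (n + 1),
      (-1 : ℝ) ^ (k+1) * ((n+1).choose (k+1) : ℝ) * ((2 * n + 2 - (k+1)).factorial : ℝ) *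
        ((j+1).descFactorial (k+1) : ℝ)
      = -(((2 * n + 2).factorial : ℝ) *
          ((-1 : ℝ) ^ k * c n k * ((j + 1).choose (k + 1) : ℝ) * ((k + 1).factorial : ℝ))) := by
    intro k hk
    have hkn : k ≤ n := Finset.mem_range_succ_iff.mp hk
    have h1 : 2 * n + 2 - (k + 1) = 2 * n + 1 - k := by omega
    have h2 : (n+1).choose (k+1) * (k+1).factorial * (n - k).factorial = (n+1).factorial := by
      have := Nat.choose_mul_factorial_mul_factorial (show k + 1 ≤ n + 1 by omega)
      simpa [show n + 1 - (k + 1) = n - k by omega] using this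
    have h3 : (j+1).descFactorial (k+1) = (k+1).factorial * (j+1).choose (k+1) :=
      Nat.descFactorial_eq_factorial_mul_choose _ _
    have h4 : ((2*n+2).factorial : ℝ) = (2*(n:ℝ)+2) * ((2*n+1).factorial : ℝ) := by
      rw [show 2*n+2 = (2*n+1)+1 by ring, Nat.factorial_succ]; push_cast; ring
    have h2' : ((n+1).choose (k+1) : ℝ) * ((k+1).factorial : ℝ) * ((n - k).factorial : ℝ)
        = ((n+1).factorial : ℝ) := by exact_mod_cast congrArg (Nat.cast : ℕ → ℝ) h2
    have h5 : ((n+1).factorial : ℝ) = ((n:ℝ)+1) * (n.factorial : ℝ) := by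
      rw [Nat.factorial_succ]; push_cast; ring
    have hnk : ((n-k).factorial : ℝ) ≠ 0 := Nat.cast_ne_zero.mpr (Nat.factorial_ne_zero _)
    have hk1 : ((k+1).factorial : ℝ) ≠ 0 := Nat.cast_ne_zero.mpr (Nat.factorial_ne_zero _)
    have h2n1 : ((2*n+1).factorial : ℝ) ≠ 0 := Nat.cast_ne_zero.mpr (Nat.factorial_ne_zero _)
    have hCn : ((n+1).choose (k+1) : ℝ) =
        ((n+1).factorial : ℝ) / (((k+1).factorial : ℝ) * ((n-k).factorial : ℝ)) := by
      rw [eq_div_iff (by positivity)]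
      linear_combination h2'
    rw [h1, h3, hCn, h4]
    unfold c
    push_cast [h5]
    field_simp
    ring
  rw [Finset.sum_congr rfl hterm] at hL
  have hsplit : ∑ k ∈ Finset.range (n+1), -(((2 * n + 2).factorial : ℝ) *
          ((-1 : ℝ) ^ k * c n k * ((j + 1).choose (k + 1) : ℝ) * ((k + 1).factorial : ℝ)))
      = -(((2 * n + 2).factorial : ℝ) * S n j) := by
    rw [S, Finset.mul_sum]
    simp
  rw [hsplit] at hL
  have hNm : 2 * n + 2 - (n + 1) = n + 1 := by omega
  rw [hNm] at hL
  have hprod : ∏ i ∈ Finset.range (n+1), ((2 * n + 2 : ℕ) - (i:ℝ) - ((j:ℝ)+1))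
      = ∏ i ∈ Finset.range (n+1), ((2 * n + 1 : ℝ) - i - j) := by
    apply Finset.prod_congr rfl
    intro i _
    push_cast
    ring
  have hF : ((2 * n + 2).factorial : ℝ) ≠ 0 := Nat.cast_ne_zero.mpr (Nat.factorial_ne_zero _)
  field_simp
  push_cast at hL hprod ⊢
  linear_combination (-1 : ℝ) * hL - ((n+1).factorial : ℝ) * hprod

lemma key1 (n j : ℕ) (h : j ≤ 2 * n + 1) :
    S n j + (if j ≤ n then ((j + 1).factorial : ℝ) * c n j else 0) = 1 := by
  rw [S_formula]
  by_cases hjn : j ≤ n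
  · rw [if_pos hjn]
    have hprod : ∏ i ∈ Finset.range (n+1), ((2 * n + 1 : ℝ) - i - j)
        = ((2*n+1-j).descFactorial (n+1) : ℝ) := by
      rw [cast_descFactorial_prod]
      apply Finset.prod_congr rfl
      intro i _
      have : ((2*n+1-j : ℕ) : ℝ) = 2 * n + 1 - j := by
        push_cast [show j ≤ 2*n+1 by omega]; ring
      rw [this]; ring
    rw [hprod]
    have hdf : ((2*n+1-j).descFactorial (n+1) : ℕ) * (n - j).factorial = (2*n+1-j).factorial := by
      rw [Nat.descFactorial_eq_factorial_mul_choose]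
      have h1 := Nat.choose_mul_factorial_mul_factorial (show n+1 ≤ 2*n+1-j by omega)
      have h2 : 2*n+1-j - (n+1) = n - j := by omega
      rw [h2] at h1
      linarith [h1]
    have hdf' : ((2*n+1-j).descFactorial (n+1) : ℝ) * ((n - j).factorial : ℝ)
        = ((2*n+1-j).factorial : ℝ) := by exact_mod_cast congrArg (Nat.cast : ℕ → ℝ) hdf
    have hnj : ((n-j).factorial : ℝ) ≠ 0 := Nat.cast_ne_zero.mpr (Nat.factorial_ne_zero _)
    have hdd : ((2*n+1-j).descFactorial (n+1) : ℝ)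
        = ((2*n+1-j).factorial : ℝ) / ((n - j).factorial : ℝ) := by
      rw [eq_div_iff hnj]; exact hdf'
    rw [hdd]
    unfold c
    have hj1 : ((j+1).factorial : ℝ) ≠ 0 := Nat.cast_ne_zero.mpr (Nat.factorial_ne_zero _)
    have h2n1 : ((2*n+1).factorial : ℝ) ≠ 0 := Nat.cast_ne_zero.mpr (Nat.factorial_ne_zero _)
    have hF : ((2*n+2).factorial : ℝ) ≠ 0 := Nat.cast_ne_zero.mpr (Nat.factorial_ne_zero _)
    have h4 : ((2*n+2).factorial : ℝ) = (2*(n:ℝ)+2) * ((2*n+1).factorial : ℝ) := by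
      rw [show 2*n+2 = (2*n+1)+1 by ring, Nat.factorial_succ]; push_cast; ring
    have h5 : ((n+1).factorial : ℝ) = ((n:ℝ)+1) * (n.factorial : ℝ) := by
      rw [Nat.factorial_succ]; push_cast; ring
    rw [h4, h5]
    field_simp
    ring
  · rw [if_neg hjn]
    have hzero : ∏ i ∈ Finset.range (n+1), ((2 * n + 1 : ℝ) - i - j) = 0 := by
      apply Finset.prod_eq_zero (Finset.mem_range.mpr (show 2*n+1-j < n+1 by omega))
      push_cast [show j ≤ 2*n+1 by omega]
      ring
    rw [hzero]
    simp

lemma key2 (n : ℕ) :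
    S n (2 * n + 2) = 1 - (-1 : ℝ) ^ (n + 1) * ((n + 1).factorial : ℝ) ^ 2 /
      ((2 * n + 2).factorial : ℝ) := by
  rw [S_formula]
  have hprod : ∏ i ∈ Finset.range (n+1), ((2 * n + 1 : ℝ) - i - (2*n+2 : ℕ))
      = (-1 : ℝ) ^ (n+1) * ((n+1).factorial : ℝ) := by
    have h1 : ∀ i ∈ Finset.range (n+1), ((2 * n + 1 : ℝ) - i - ((2*n+2 : ℕ) : ℝ))
        = (-1) * ((i:ℝ) + 1) := by
      intro i _; push_cast; ring
    rw [Finset.prod_congr rfl h1, Finset.prod_mul_distrib, Finset.prod_const,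
      Finset.card_range]
    have hnat := Finset.prod_range_add_one_eq_factorial (n+1)
    have h2 : ((∏ i ∈ Finset.range (n+1), (i+1) : ℕ) : ℝ) = ((n+1).factorial : ℝ) := by
      exact_mod_cast congrArg (Nat.cast : ℕ → ℝ) hnat
    rw [Nat.cast_prod] at h2
    push_cast at h2
    rw [h2]
  rw [hprod]
  ring

noncomputable def QA (n : ℕ) : ℝ[X] :=
  ∑ k ∈ Finset.range (n + 1),
    C (-(2 / Real.sqrt π) * (c n k * ((PP k).eval 0) * ((k : ℝ) + 1))) * X ^ k

noncomputable def QB (n : ℕ) : ℝ[X] :=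
  C (2 / Real.sqrt π) *
    (1 - ∑ k ∈ Finset.range (n + 1), C (c n k * (-1) ^ k) * EE (X ^ (k + 1) * PP k))

lemma f_eq (n : ℕ) : f n = fun x => (2 / Real.sqrt π) * ∑ k ∈ Finset.range (n + 1),
    c n k * (x ^ (k + 1) * ((PP k).eval 0 + (-1 : ℝ) ^ k * ((PP k).eval x * phi x))) := by
  funext x
  unfold f
  congr 1
  apply Finset.sum_congr rfl
  intro k _
  rw [p_eq]
  show c n k * x ^ (k+1) * (eval 0 (PP k) + (-1:ℝ)^k * eval x (PP k) * phi x) = _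
  ring

lemma deriv_residual (n : ℕ) :
    deriv (fun x => erf x - f n x) =
      fun x => (QA n).eval x + (QB n).eval x * phi x := by
  rw [f_eq]
  funext x
  have hcont : Continuous (fun t : ℝ => Real.exp (-t ^ 2)) := by continuity
  have hint : HasDerivAt (fun u => ∫ t in (0:ℝ)..u, Real.exp (-t ^ 2)) (Real.exp (-x ^ 2)) x :=
    (hcont.integral_hasStrictDerivAt 0 x).hasDerivAt
  have herf : HasDerivAt erf (2 / Real.sqrt π * phi x) x := by
    unfold erf
    exact hint.const_mul _
  have hterm : ∀ k ∈ Finset.range (n + 1), HasDerivAt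
      (fun x => c n k * (x ^ (k + 1) * ((PP k).eval 0 + (-1 : ℝ) ^ k * ((PP k).eval x * phi x))))
      (c n k * ((((k:ℝ)+1) * x ^ k) * ((PP k).eval 0 + (-1 : ℝ) ^ k * ((PP k).eval x * phi x))
        + x ^ (k+1) * ((-1 : ℝ) ^ k * ((derivative (PP k)).eval x * phi x
            + (PP k).eval x * (-2 * x * phi x))))) x := by
    intro k _
    have h1 : HasDerivAt (fun x : ℝ => x ^ (k + 1)) (((k:ℝ)+1) * x ^ k) x := by
      simpa using hasDerivAt_pow (k+1) x
    have h2 := ((PP k).hasDerivAt x).mul (hasDerivAt_phi x)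
    have h3 := (h2.const_mul ((-1 : ℝ) ^ k)).const_add ((PP k).eval 0)
    exact (h1.mul h3).const_mul (c n k)
  have hf : HasDerivAt (fun x => (2 / Real.sqrt π) * ∑ k ∈ Finset.range (n + 1),
      c n k * (x ^ (k + 1) * ((PP k).eval 0 + (-1 : ℝ) ^ k * ((PP k).eval x * phi x))))
      ((2 / Real.sqrt π) * ∑ k ∈ Finset.range (n + 1),
        (c n k * ((((k:ℝ)+1) * x ^ k) * ((PP k).eval 0 + (-1 : ℝ) ^ k * ((PP k).eval x * phi x))
        + x ^ (k+1) * ((-1 : ℝ) ^ k * ((derivative (PP k)).eval x * phi x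
            + (PP k).eval x * (-2 * x * phi x)))))) x :=
    (HasDerivAt.fun_sum hterm).const_mul _
  rw [(herf.fun_sub hf).deriv]
  have hEval : ∀ k : ℕ, (EE (X ^ (k+1) * PP k)).eval x
      = ((k:ℝ)+1) * x ^ k * (PP k).eval x + x ^ (k+1) * (derivative (PP k)).eval x
        - 2 * (x * (x ^ (k+1) * (PP k).eval x)) := by
    intro k
    unfold EE
    rw [derivative_mul, derivative_X_pow]
    simp only [Nat.add_sub_cancel]
    simp [C_eq_natCast]
    try push_cast
    try ring
  have hQA : (QA n).eval x = ∑ k ∈ Finset.range (n + 1),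
      (-(2 / Real.sqrt π) * (c n k * ((PP k).eval 0) * ((k : ℝ) + 1))) * x ^ k := by
    unfold QA
    rw [eval_finset_sum]
    apply Finset.sum_congr rfl
    intro k _
    simp
  have hQB : (QB n).eval x = (2 / Real.sqrt π) *
      (1 - ∑ k ∈ Finset.range (n + 1), (c n k * (-1:ℝ) ^ k) * (EE (X ^ (k + 1) * PP k)).eval x) := by
    unfold QB
    rw [eval_mul, eval_C, eval_sub, eval_one, eval_finset_sum]
    congr 2
    apply Finset.sum_congr rfl
    intro k _
    simp
  rw [hQA, hQB]
  have hsum1 : ∑ k ∈ Finset.range (n + 1),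
      (c n k * ((((k:ℝ)+1) * x ^ k) * ((PP k).eval 0 + (-1 : ℝ) ^ k * ((PP k).eval x * phi x))
        + x ^ (k+1) * ((-1 : ℝ) ^ k * ((derivative (PP k)).eval x * phi x
            + (PP k).eval x * (-2 * x * phi x)))))
      = ∑ k ∈ Finset.range (n + 1),
      ((c n k * ((PP k).eval 0) * ((k : ℝ) + 1)) * x ^ k
        + ((c n k * (-1:ℝ) ^ k) * (EE (X ^ (k + 1) * PP k)).eval x) * phi x) := by
    apply Finset.sum_congr rfl
    intro k _
    rw [hEval k]
    ring
  rw [hsum1, Finset.sum_add_distrib, ← Finset.sum_mul]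
  have hsum2 : ∑ k ∈ Finset.range (n + 1),
      (-(2 / Real.sqrt π) * (c n k * ((PP k).eval 0) * ((k : ℝ) + 1))) * x ^ k
      = -(2 / Real.sqrt π) * ∑ k ∈ Finset.range (n + 1),
        (c n k * ((PP k).eval 0) * ((k : ℝ) + 1)) * x ^ k := by
    rw [Finset.mul_sum]
    apply Finset.sum_congr rfl
    intro k _
    ring
  rw [hsum2]
  ring

lemma eval0_iter_QA (n j : ℕ) :
    (derivative^[j] (QA n)).eval 0 =
      if j ≤ n then -(2 / Real.sqrt π) * (c n j * ((PP j).eval 0) * ((j:ℝ) + 1)) *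
        (j.factorial : ℝ) else 0 := by
  unfold QA
  rw [Polynomial.iterate_derivative_sum, eval_finset_sum]
  have hterm : ∀ k ∈ Finset.range (n+1),
      (derivative^[j] (C (-(2 / Real.sqrt π) * (c n k * ((PP k).eval 0) * ((k : ℝ) + 1))) * X ^ k)).eval 0
      = if k = j then (-(2 / Real.sqrt π) * (c n j * ((PP j).eval 0) * ((j : ℝ) + 1))) *
          (j.factorial : ℝ) else 0 := by
    intro k _
    rw [Polynomial.iterate_derivative_C_mul, eval_mul, eval_C,
      Polynomial.iterate_derivative_X_pow_eq_natCast_mul, eval_mul, eval_natCast, eval_pow, eval_X]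
    rcases lt_trichotomy k j with hkj | hkj | hkj
    · rw [if_neg (by omega), Nat.descFactorial_of_lt hkj]
      simp
    · subst hkj
      rw [if_pos rfl, Nat.sub_self, pow_zero, Nat.descFactorial_self]
      ring
    · rw [if_neg (by omega), zero_pow (show k - j ≠ 0 by omega)]
      ring
  rw [Finset.sum_congr rfl hterm, Finset.sum_ite_eq' (Finset.range (n+1))]
  simp only [Finset.mem_range]
  by_cases hj : j ≤ n
  · rw [if_pos (show j < n + 1 by omega), if_pos hj]
  · rw [if_neg (show ¬ (j < n + 1) by omega), if_neg hj]

lemma main_value (n j : ℕ) :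
    iteratedDeriv j (deriv (fun x => erf x - f n x)) 0 =
      (2 / Real.sqrt π) * (PP j).eval 0 *
        (1 - (if j ≤ n then ((j + 1).factorial : ℝ) * c n j else 0) - S n j) := by
  rw [deriv_residual, iteratedDeriv_pair]
  show (derivative^[j] (QA n)).eval 0 + (EE^[j] (QB n)).eval 0 * phi 0 = _
  have hphi0 : phi 0 = 1 := by simp [phi]
  rw [hphi0, mul_one, eval0_iter_QA]
  have hQB : (EE^[j] (QB n)).eval 0 = (2 / Real.sqrt π) *
      ((PP j).eval 0 - ∑ k ∈ Finset.range (n+1),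
        (c n k * (-1:ℝ)^k) * (((j+1).choose (k+1) : ℝ) * (((k+1).factorial : ℝ)) * (PP j).eval 0)) := by
    unfold QB
    rw [EE_iter_const_mul j _ derivative_C, EE_iter_sub, EE_iter_sum, eval_mul, eval_C, eval_sub,
      PP_eq_iter]
    congr 2
    rw [eval_finset_sum]
    apply Finset.sum_congr rfl
    intro k _
    rw [EE_iter_const_mul j _ derivative_C, ← Function.iterate_succ_apply, eval_mul, eval_C,
      eval0_EE_iter (j+1) (k+1) k]
    have he : k + (j + 1) - (k + 1) = j := by omega
    try rw [he]
    try ring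
  rw [hQB]
  have hS : ∑ k ∈ Finset.range (n+1),
      (c n k * (-1:ℝ)^k) * (((j+1).choose (k+1) : ℝ) * (((k+1).factorial : ℝ)) * (PP j).eval 0)
      = S n j * (PP j).eval 0 := by
    rw [S, Finset.sum_mul]
    apply Finset.sum_congr rfl
    intro k _
    ring
  rw [hS]
  by_cases hj : j ≤ n
  · rw [if_pos hj, if_pos hj]
    have hfs : ((j+1).factorial : ℝ) = ((j:ℝ)+1) * (j.factorial : ℝ) := by
      rw [Nat.factorial_succ]; push_cast; ring
    rw [hfs]
    ring
  · rw [if_neg hj, if_neg hj]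
    ring

lemma prod_odds (n : ℕ) :
    2 ^ n * (n.factorial : ℝ) * ∏ i ∈ Finset.range n, (2 * (i : ℝ) + 1)
      = ((2 * n).factorial : ℝ) := by
  induction n with
  | zero => simp
  | succ n ih =>
      rw [Finset.prod_range_succ, show 2 * (n+1) = (2*n+1)+1 by ring, Nat.factorial_succ,
        Nat.factorial_succ, Nat.factorial_succ]
      push_cast
      push_cast at ih
      linear_combination (2*(2*(n:ℝ)+1)*((n:ℝ)+1)) * ih

end Resid

/-- The derivative of the residual `ε_n = erf - f_n` vanishes to order `2n+2` at the
origin, with leading coefficient `(2n+2)!/(√π · 2^n · ∏_{i=0}^n (2i+1))`. -/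
theorem residual_deriv_vanishing_order (n : ℕ) :
    (∀ j ≤ 2 * n + 1,
      iteratedDeriv j (deriv (fun x => erf x - f n x)) 0 = 0) ∧
    iteratedDeriv (2 * n + 2) (deriv (fun x => erf x - f n x)) 0 =
      (Nat.factorial (2 * n + 2) : ℝ) /
        (Real.sqrt π * 2 ^ n * ∏ i ∈ Finset.range (n + 1), (2 * (i : ℝ) + 1)) := by
  constructor
  · intro j hj
    rw [Resid.main_value n j]
    have h := Resid.key1 n j hj
    have hz : (1 : ℝ) - (if j ≤ n then ((j + 1).factorial : ℝ) * c n j else 0) - Resid.S n j = 0 := by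
      linarith
    rw [hz, mul_zero]
  · rw [Resid.main_value n (2*n+2)]
    rw [if_neg (show ¬ (2*n+2 ≤ n) by omega), Resid.key2 n]
    have hpp : (Resid.PP (2*n+2)).eval 0
        = (-2 : ℝ) ^ (n+1) * ∏ i ∈ Finset.range (n+1), (2 * (i : ℝ) + 1) := by
      have h := Resid.pp0_even (n+1)
      rwa [show 2 * (n+1) = 2*n+2 by ring] at h
    rw [hpp]
    have hprod := Resid.prod_odds (n+1)
    rw [show 2 * (n+1) = 2*n+2 by ring] at hprod
    have hπ : Real.sqrt π ≠ 0 := by positivity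
    have hP : (∏ i ∈ Finset.range (n+1), (2 * (i : ℝ) + 1)) ≠ 0 := by
      apply ne_of_gt
      apply Finset.prod_pos
      intro i _
      positivity
    have hF : ((2*n+2).factorial : ℝ) ≠ 0 := Nat.cast_ne_zero.mpr (Nat.factorial_ne_zero _)
    have hneg : (-2 : ℝ)^(n+1) * (-1 : ℝ)^(n+1) = 2^(n+1) := by
      rw [← mul_pow]; norm_num
    rw [← hprod, show ((-2:ℝ))^(n+1) = 2^(n+1) * (-1)^(n+1) by rw [← mul_pow]; norm_num]
    rcases neg_one_pow_eq_or ℝ (n+1) with h1 | h1 <;> rw [h1] <;> field_simp <;> ring
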